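/- arXiv:1811.06431 — 3 statements merged into one kernel-verified Lean document; each statement's English description precedes it below -/
import Mathlib

section
/- Suppose there exists a subsystem i ∈ 𝒮 whose (i,𝒮,𝒞)-weakly superior set is nonempty, i.e., there exists a system valid x such that no system valid x̄ satisfies f i x̄ ≨ f i x. Then the (𝒮,𝒮,𝒞)-weakly superior set is nonempty, i.e., there exists a system valid x such that no system valid x̄ satisfies f j x̄ ≨ f j x for all j ∈ 𝒮. -/
/-- The system valid set: points feasible for all subsystems and all linking constraints. -/
def systemValid {n m k : ℕ} (X : Fin m → Set (Fin n → ℝ))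
    (L : Fin k → Set (Fin n → ℝ)) : Set (Fin n → ℝ) :=
  {x | (∀ i, x ∈ X i) ∧ (∀ j, x ∈ L j)}

/-- If there is a subsystem `i` whose `(i,𝒮,𝒞)`-weakly superior set is nonempty,
then the `(𝒮,𝒮,𝒞)`-weakly superior set is nonempty. -/
theorem exists_weaklySuperior_of_exists_subsystem {n m k : ℕ} (p : Fin m → ℕ)
    (f : ∀ i : Fin m, (Fin n → ℝ) → Fin (p i) → ℝ)
    (X : Fin m → Set (Fin n → ℝ)) (L : Fin k → Set (Fin n → ℝ))
    (h : ∃ i : Fin m, ∃ x ∈ systemValid X L,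
      ¬ ∃ y ∈ systemValid X L, f i y ≤ f i x ∧ f i y ≠ f i x) :
    ∃ x ∈ systemValid X L,
      ¬ ∃ y ∈ systemValid X L, ∀ j, f j y ≤ f j x ∧ f j y ≠ f j x := by
  obtain ⟨i, x, hx, hni⟩ := h
  exact ⟨x, hx, fun ⟨y, hy, hall⟩ => hni ⟨y, hy, hall i⟩⟩
end

section
/- (Correctness of the hierarchical algorithm with all feasibility and consistency constraints.) Let X ⊆ ℝ^n be the system valid set and define recursively Y_1 := Eff(f_1, X) and Y_i := Eff(f_i, Y_{i-1}) for i = 2,…,m, where Eff(g, Z) := {x ∈ Z | ¬∃ x̄ ∈ Z, g(x̄) ≨ g(x)}. Then Y_m is contained in the (𝒮,𝒮,𝒞)-superior set: every x ∈ Y_m satisfies x ∈ X and there is no x̄ ∈ X with f_i(x̄) ≦ f_i(x) for all i = 1,…,m and f_j(x̄) ≨ f_j(x) for some j. -/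
/-- The set of efficient points of the vector objective `g` over `Z`:
points of `Z` that are not dominated by any other point of `Z`. -/
def Eff {n p : ℕ} (g : (Fin n → ℝ) → Fin p → ℝ) (Z : Set (Fin n → ℝ)) :
    Set (Fin n → ℝ) :=
  {x ∈ Z | ¬ ∃ y ∈ Z, g y ≤ g x ∧ g y ≠ g x}

/-- Correctness of the hierarchical algorithm with all feasibility and consistency
constraints: with `Y_1 = Eff(f_1, X)` and `Y_i = Eff(f_i, Y_{i-1})` for `i = 2,…,m`
over the system valid set `X`, every point of `Y_m` is `(𝒮,𝒮,𝒞)`-superior, i.e.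
system valid and not dominated (in the superiority sense) by any system valid point. -/
theorem hierarchical_algorithm_correct (n m : ℕ) (hm : 1 ≤ m) (p : ℕ → ℕ)
    (f : ∀ i : ℕ, (Fin n → ℝ) → Fin (p i) → ℝ)
    (X : Set (Fin n → ℝ)) (Y : ℕ → Set (Fin n → ℝ))
    (hY1 : Y 1 = Eff (f 1) X)
    (hYstep : ∀ i : ℕ, 1 ≤ i → i < m → Y (i + 1) = Eff (f (i + 1)) (Y i)) :
    ∀ x ∈ Y m, x ∈ X ∧
      ¬ ∃ y ∈ X, (∀ i, 1 ≤ i → i ≤ m → f i y ≤ f i x) ∧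
        ∃ j, 1 ≤ j ∧ j ≤ m ∧ f j y ≤ f j x ∧ f j y ≠ f j x := by
  intro x hxm
  -- x belongs to every level Y i for 1 ≤ i ≤ m
  have hxY : ∀ i : ℕ, 1 ≤ i → i ≤ m → x ∈ Y i := by
    have key : ∀ k : ℕ, k ≤ m - 1 → x ∈ Y (m - k) := by
      intro k
      induction k with
      | zero => intro _; simpa using hxm
      | succ k ih =>
        intro hk
        have hk' : k ≤ m - 1 := Nat.le_of_succ_le hk
        have hxk : x ∈ Y (m - k) := ih hk'
        have h1 : 1 ≤ m - (k + 1) := by omega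
        have h2 : m - (k + 1) < m := by omega
        have heq : m - k = (m - (k + 1)) + 1 := by omega
        rw [heq, hYstep _ h1 h2] at hxk
        exact hxk.1
    intro i h1 h2
    have := key (m - i) (by omega)
    have : x ∈ Y i := by
      have heq : m - (m - i) = i := by omega
      rwa [heq] at this
    exact this
  have hx1 : x ∈ Y 1 := hxY 1 le_rfl hm
  rw [hY1] at hx1
  refine ⟨hx1.1, ?_⟩
  rintro ⟨y, hyX, hle, j, hj1, hjm, hjle, hjne⟩
  -- by induction: y ∈ Y i and f i y = f i x for all 1 ≤ i ≤ m
  have main : ∀ i : ℕ, 1 ≤ i → i ≤ m → y ∈ Y i ∧ f i y = f i x := by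
    intro i hi1
    induction i, hi1 using Nat.le_induction with
    | base =>
      intro _
      have hfle := hle 1 le_rfl hm
      have hfeq : f 1 y = f 1 x := by
        by_contra hne
        exact hx1.2 ⟨y, hyX, hfle, hne⟩
      refine ⟨?_, hfeq⟩
      rw [hY1]
      refine ⟨hyX, ?_⟩
      rintro ⟨z, hzX, hzle, hzne⟩
      rw [hfeq] at hzle hzne
      exact hx1.2 ⟨z, hzX, hzle, hzne⟩
    | succ i hi1 ih =>
      intro him
      have hilt : i < m := by omega
      obtain ⟨hyYi, _⟩ := ih (le_of_lt hilt)
      have hxYi : x ∈ Y (i + 1) := hxY (i + 1) (by omega) him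
      rw [hYstep i hi1 hilt] at hxYi ⊢
      have hfle := hle (i + 1) (by omega) him
      have hfeq : f (i + 1) y = f (i + 1) x := by
        by_contra hne
        exact hxYi.2 ⟨y, hyYi, hfle, hne⟩
      refine ⟨⟨hyYi, ?_⟩, hfeq⟩
      rintro ⟨z, hzY, hzle, hzne⟩
      rw [hfeq] at hzle hzne
      exact hxYi.2 ⟨z, hzY, hzle, hzne⟩
  exact hjne (main j hj1 hjm).2
end

section
/- (Correctness of the hierarchical algorithm with step-by-step inclusion of feasibility and consistency.) Let Z_1,…,Z_m ⊆ ℝ^n be sets whose intersection is the system valid set, X = Z_1 ∩ ⋯ ∩ Z_m (in the complex system, Z_i is the set of points that are feasible for subsystem i and consistent with the linking constraints C_i joining subsystem i to earlier subsystems). Define recursively Y_1 := Eff(f_1, Z_1) and Y_i := Eff(f_i, Z_i ∩ Y_{i-1}) for i = 2,…,m, where Eff(g, Z) := {x ∈ Z | ¬∃ x̄ ∈ Z, g(x̄) ≨ g(x)}. Then Y_m is contained in the (𝒮,𝒮,𝒞)-superior set: every x ∈ Y_m satisfies x ∈ X and there is no x̄ ∈ X with f_i(x̄) ≦ f_i(x)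 for all i = 1,…,m and f_j(x̄) ≨ f_j(x) for some j. -/
/-- Correctness of the hierarchical algorithm with step-by-step inclusion of
feasibility and consistency: with sets `Z_1,…,Z_m` whose intersection is the system
valid set `X`, `Y_1 = Eff(f_1, Z_1)` and `Y_i = Eff(f_i, Z_i ∩ Y_{i-1})` for
`i = 2,…,m`, every point of `Y_m` is `(𝒮,𝒮,𝒞)`-superior, i.e. system valid and not
dominated (in the superiority sense) by any system valid point. -/
theorem hierarchical_stepwise_algorithm_correct (n m : ℕ) (hm : 1 ≤ m) (p : ℕ → ℕ)
    (f : ∀ i : ℕ, (Fin n → ℝ) → Fin (p i) → ℝ)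
    (Z : ℕ → Set (Fin n → ℝ)) (X : Set (Fin n → ℝ))
    (hX : X = {x | ∀ i, 1 ≤ i → i ≤ m → x ∈ Z i})
    (Y : ℕ → Set (Fin n → ℝ))
    (hY1 : Y 1 = Eff (f 1) (Z 1))
    (hYstep : ∀ i : ℕ, 1 ≤ i → i < m → Y (i + 1) = Eff (f (i + 1)) (Z (i + 1) ∩ Y i)) :
    ∀ x ∈ Y m, x ∈ X ∧
      ¬ ∃ y ∈ X, (∀ i, 1 ≤ i → i ≤ m → f i y ≤ f i x) ∧
        ∃ j, 1 ≤ j ∧ j ≤ m ∧ f j y ≤ f j x ∧ f j y ≠ f j x := by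
  -- Lemma A: membership propagates down the hierarchy.
  have A : ∀ k, 1 ≤ k → k ≤ m → ∀ x ∈ Y k, ∀ i, 1 ≤ i → i ≤ k → x ∈ Y i ∧ x ∈ Z i := by
    intro k hk
    induction k, hk using Nat.le_induction with
    | base =>
      intro _ x hx i hi1 hi2
      interval_cases i
      rw [hY1] at hx
      exact ⟨hY1 ▸ hx, hx.1⟩
    | succ k hk ih =>
      intro hkm x hx i hi1 hi2
      have hstep := hYstep k hk (by omega)
      rw [hstep] at hx
      rcases Nat.lt_or_ge i (k + 1) with h | h
      · exact ih (by omega) x hx.1.2 i hi1 (by omega)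
      · have : i = k + 1 := by omega
        subst this
        exact ⟨hstep ▸ hx, hx.1.1⟩
  -- Lemma B: if y is valid up to level k and dominates-or-equals x ∈ Y k componentwise,
  -- then y ∈ Y i and f i y = f i x for all 1 ≤ i ≤ k.
  have B : ∀ k, 1 ≤ k → k ≤ m → ∀ x ∈ Y k, ∀ y, (∀ i, 1 ≤ i → i ≤ k → y ∈ Z i) →
      (∀ i, 1 ≤ i → i ≤ k → f i y ≤ f i x) →
      ∀ i, 1 ≤ i → i ≤ k → y ∈ Y i ∧ f i y = f i x := by
    intro k hk hkm x hx y hyZ hyle i hi1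
    induction i, hi1 using Nat.le_induction with
    | base =>
      intro _
      have hx1 : x ∈ Y 1 := (A k hk hkm x hx 1 le_rfl hk).1
      rw [hY1] at hx1
      have heq : f 1 y = f 1 x := by
        by_contra hne
        exact hx1.2 ⟨y, hyZ 1 le_rfl hk, hyle 1 le_rfl hk, hne⟩
      refine ⟨hY1 ▸ ⟨hyZ 1 le_rfl hk, ?_⟩, heq⟩
      rintro ⟨z, hz, hzle, hzne⟩
      exact hx1.2 ⟨z, hz, heq ▸ hzle, heq ▸ hzne⟩
    | succ i hi ihh =>
      intro hik
      obtain ⟨hyYi, _⟩ := ihh (by omega)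
      have hxi : x ∈ Y (i + 1) := (A k hk hkm x hx (i + 1) (by omega) hik).1
      have hstep := hYstep i hi (by omega)
      rw [hstep] at hxi
      have hyZYi : y ∈ Z (i + 1) ∩ Y i := ⟨hyZ (i + 1) (by omega) hik, hyYi⟩
      have heq : f (i + 1) y = f (i + 1) x := by
        by_contra hne
        exact hxi.2 ⟨y, hyZYi, hyle (i + 1) (by omega) hik, hne⟩
      refine ⟨hstep ▸ ⟨hyZYi, ?_⟩, heq⟩
      rintro ⟨z, hz, hzle, hzne⟩
      exact hxi.2 ⟨z, hz, heq ▸ hzle, heq ▸ hzne⟩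
  intro x hx
  constructor
  · rw [hX]
    intro i hi1 hi2
    exact (A m hm le_rfl x hx i hi1 hi2).2
  · rintro ⟨y, hyX, hyle, j, hj1, hj2, _, hjne⟩
    rw [hX] at hyX
    exact hjne (B m hm le_rfl x hx y hyX hyle j hj1 hj2).2
end
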